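/- Let n ≥ 4 and let φ_Z be a cyclic endomorphism of A_Z[D_n] = A[D_n]/Z(A[D_n]), say φ_Z(t_{Z,i}) = g_Z for all i. Then g_Z has finite order; more precisely g_Z^{κn(n-1)} = 1, where κ = 2 if n is odd and κ = 1 if n is even. -/

import Mathlib

/-- Braid relator `x y x (y x y)⁻¹`. -/
def braidRel {α : Type} (x y : FreeGroup α) : FreeGroup α := x * y * x * (y * x * y)⁻¹

/-- Commutation relator `x y (y x)⁻¹`. -/
def commRel {α : Type} (x y : FreeGroup α) : FreeGroup α := x * y * (y * x)⁻¹

/-- Relators for the Artin group of type `A_m` on generators `s_1, …, s_m`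
(0-based indices `0, …, m-1`). -/
def ArelA (m : ℕ) : Set (FreeGroup (Fin m)) :=
  {r | ∃ i j : Fin m,
    (j.val = i.val + 1 ∧ r = braidRel (FreeGroup.of i) (FreeGroup.of j)) ∨
    (i.val + 2 ≤ j.val ∧ r = commRel (FreeGroup.of i) (FreeGroup.of j))}

/-- The Artin group of type `A_m` (braid group on `m+1` strands). -/
abbrev ArtinA (m : ℕ) := PresentedGroup (ArelA m)

/-- The generator `s_{i+1}` of `A[A_m]` (0-based index `i`; junk value `1` if `i ≥ m`). -/
def gA (m : ℕ) (i : ℕ) : ArtinA m :=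
  if h : i < m then PresentedGroup.of ⟨i, h⟩ else 1

/-- 0-based adjacency in the Coxeter graph `D_n` on vertices `0, …, n-1`
(vertex `i` corresponds to `t_{i+1}`): edges `(i, i+1)` for `i+1 ≤ n-2`
and the edge `(n-3, n-1)`. -/
def adjD (n : ℕ) (i j : ℕ) : Prop :=
  (j = i + 1 ∧ j ≤ n - 2) ∨ (i = n - 3 ∧ j = n - 1)

/-- Relators for the Artin group of type `D_n`: braid relation along each edge,
commutation for non-adjacent pairs. -/
def ArelD (n : ℕ) : Set (FreeGroup (Fin n)) :=
  {r | ∃ i j : Fin n, i.val < j.val ∧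
    ((adjD n i.val j.val ∧ r = braidRel (FreeGroup.of i) (FreeGroup.of j)) ∨
     (¬ adjD n i.val j.val ∧ r = commRel (FreeGroup.of i) (FreeGroup.of j)))}

/-- The Artin group of type `D_n`. -/
abbrev ArtinD (n : ℕ) := PresentedGroup (ArelD n)

/-- The generator `t_{i+1}` of `A[D_n]` (0-based index `i`; junk value `1` if `i ≥ n`). -/
def gD (n : ℕ) (i : ℕ) : ArtinD n :=
  if h : i < n then PresentedGroup.of ⟨i, h⟩ else 1

/-- The word `(s_m ⋯ s_1)(s_m ⋯ s_2) ⋯ (s_m s_{m-1}) s_m` (1-based) evaluated on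
a family `s` of group elements (0-based). This is the Garside element of type `A_m`. -/
def deltaAin {G : Type} [Group G] (m : ℕ) (s : ℕ → G) : G :=
  ((List.range m).map (fun k => ((List.range (m - k)).map (fun j => s (m - 1 - j))).prod)).prod

/-- The Garside element `Δ[A_m]`. -/
def deltaA (m : ℕ) : ArtinA m := deltaAin m (gA m)

/-- The factor `t_{k+1} ⋯ t_{n-2} t_{n-1} t_n t_{n-2} ⋯ t_{k+1}` (1-based) of `Δ[D_n]`,
0-based index `k`. -/
def factorD {G : Type} [Group G] (n : ℕ) (t : ℕ → G) (k : ℕ) : G :=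
  ((List.range (n - 2 - k)).map (fun j => t (k + j))).prod * t (n - 2) * t (n - 1) *
    ((List.range (n - 2 - k)).map (fun j => t (n - 3 - j))).prod

/-- The word giving the Garside element of type `D_n`, evaluated on a family `t`. -/
def deltaDin {G : Type} [Group G] (n : ℕ) (t : ℕ → G) : G :=
  ((List.range (n - 1)).map (factorD n t)).prod

/-- The Garside element `Δ[D_n]`. -/
def deltaD (n : ℕ) : ArtinD n := deltaDin n (gD n)

/-- The Garside element `Δ_Y` of the standard parabolic subgroup of `A[D_n]`
generated by `Y = {t_1, …, t_{n-1}}` (a copy of `A[A_{n-1}]`). -/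
def deltaY (n : ℕ) : ArtinD n := deltaAin (n - 1) (gD n)

/-- `κ = 2` if `n` is odd and `κ = 1` if `n` is even. -/
def kap (n : ℕ) : ℤ := if Odd n then 2 else 1

/-- The central quotient `A[D_n]/Z(A[D_n])`. -/
abbrev AZD (n : ℕ) := ArtinD n ⧸ Subgroup.center (ArtinD n)

section AUX


namespace ArtinAux
variable {G : Type} [Group G]

def up (t : ℕ → G) (a m : ℕ) : G := ((List.range m).map (fun j => t (a + j))).prod
def dwn (t : ℕ → G) (b m : ℕ) : G := ((List.range m).map (fun j => t (b - j))).prod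

@[simp] lemma up_zero (t : ℕ → G) (a : ℕ) : up t a 0 = 1 := rfl
@[simp] lemma dwn_zero (t : ℕ → G) (b : ℕ) : dwn t b 0 = 1 := rfl

lemma up_succ (t : ℕ → G) (a m : ℕ) : up t a (m+1) = up t a m * t (a+m) := by
  simp [up, List.range_succ]

lemma up_succ' (t : ℕ → G) (a m : ℕ) : up t a (m+1) = t a * up t (a+1) m := by
  simp only [up, List.range_succ_eq_map, List.map_cons, List.map_map, List.prod_cons,
    Nat.add_zero]
  congr 1
  congr 1
  apply List.map_congr_left
  intro j _
  simp only [Function.comp_apply]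
  congr 1
  omega

lemma dwn_succ' (t : ℕ → G) (b m : ℕ) : dwn t b (m+1) = t b * dwn t (b-1) m := by
  simp only [dwn, List.range_succ_eq_map, List.map_cons, List.map_map, List.prod_cons,
    Nat.sub_zero]
  congr 1
  congr 1
  apply List.map_congr_left
  intro j _
  simp only [Function.comp_apply]
  congr 1
  omega

lemma dwn_succ (t : ℕ → G) (b m : ℕ) : dwn t b (m+1) = dwn t b m * t (b-m) := by
  simp [dwn, List.range_succ]

lemma comm_up {x : G} {t : ℕ → G} {a m : ℕ} (h : ∀ j < m, Commute x (t (a+j))) :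
    Commute x (up t a m) := by
  apply Commute.list_prod_right
  intro y hy
  simp only [List.mem_map, List.mem_range] at hy
  obtain ⟨j, hj, rfl⟩ := hy
  exact h j hj

lemma comm_dwn {x : G} {t : ℕ → G} {b m : ℕ} (h : ∀ j < m, Commute x (t (b-j))) :
    Commute x (dwn t b m) := by
  apply Commute.list_prod_right
  intro y hy
  simp only [List.mem_map, List.mem_range] at hy
  obtain ⟨j, hj, rfl⟩ := hy
  exact h j hj

abbrev Br (a b : G) : Prop := a * b * a = b * a * b

lemma dwn_conj {t : ℕ → G} {m : ℕ}
    (hb : ∀ i, i + 1 ≤ m → Br (t i) (t (i+1)))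
    (hc : ∀ i j, i + 2 ≤ j → j ≤ m → Commute (t i) (t j)) :
    ∀ i, 1 ≤ i → i ≤ m → dwn t m (m+1) * t i = t (i-1) * dwn t m (m+1) := by
  induction m with
  | zero => intro i h1 h2; omega
  | succ m IH =>
    intro i h1 h2
    have hd : dwn t (m+1) (m+2) = t (m+1) * dwn t m (m+1) := by
      have := dwn_succ' t (m+1) (m+1)
      simpa using this
    rcases Nat.lt_or_ge i (m+1) with hi | hi
    · have IH' := IH (fun i h => hb i (by omega)) (fun i j h1 h2 => hc i j h1 (by omega)) i h1
        (by omega)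
      have hcm : t (m+1) * t (i-1) = t (i-1) * t (m+1) :=
        (hc (i-1) (m+1) (by omega) (by omega)).symm.eq
      calc dwn t (m+1) (m+2) * t i = t (m+1) * (dwn t m (m+1) * t i) := by rw [hd, mul_assoc]
        _ = t (m+1) * (t (i-1) * dwn t m (m+1)) := by rw [IH']
        _ = t (m+1) * t (i-1) * dwn t m (m+1) := by rw [mul_assoc]
        _ = t (i-1) * t (m+1) * dwn t m (m+1) := by rw [hcm]
        _ = t (i-1) * dwn t (m+1) (m+2) := by rw [mul_assoc, ← hd]
    · have hi' : i = m + 1 := by omega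
      subst hi'
      rcases Nat.eq_zero_or_pos m with hm | hm
      · subst hm
        have e : dwn t 1 2 = t 1 * t 0 := by
          rw [dwn_succ' t 1 1, dwn_succ' t 0 0]
          simp
        have hb0 := hb 0 (by omega)
        simp only [Nat.add_sub_cancel, e]
        calc t 1 * t 0 * t 1 = t 0 * t 1 * t 0 := (hb0).symm
          _ = t 0 * (t 1 * t 0) := by rw [mul_assoc]
      · have hd2 : dwn t m (m+1) = t m * dwn t (m-1) m := by
          have := dwn_succ' t m m; simpa using this
        have hcm : Commute (t (m+1)) (dwn t (m-1) m) :=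
          comm_dwn (fun j hj => (hc (m-1-j) (m+1) (by omega) (by omega)).symm)
        have hbm := hb m (by omega)
        simp only [Nat.add_sub_cancel]
        calc dwn t (m+1) (m+2) * t (m+1)
            = t (m+1) * (t m * (dwn t (m-1) m * t (m+1))) := by
              rw [hd, hd2]; group
          _ = t (m+1) * (t m * (t (m+1) * dwn t (m-1) m)) := by rw [← hcm.eq]
          _ = t (m+1) * t m * t (m+1) * dwn t (m-1) m := by group
          _ = t m * t (m+1) * t m * dwn t (m-1) m := by rw [← hbm]
          _ = t m * (t (m+1) * (t m * dwn t (m-1) m)) := by group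
          _ = t m * dwn t (m+1) (m+2) := by rw [← hd2, ← hd]

lemma up_conj {t : ℕ → G} {m : ℕ}
    (hb : ∀ i, i + 1 ≤ m → Br (t i) (t (i+1)))
    (hc : ∀ i j, i + 2 ≤ j → j ≤ m → Commute (t i) (t j)) :
    ∀ i, 1 ≤ i → i ≤ m → t i * up t 0 (m+1) = up t 0 (m+1) * t (i-1) := by
  induction m with
  | zero => intro i h1 h2; omega
  | succ m IH =>
    intro i h1 h2
    have hu : up t 0 (m+2) = up t 0 (m+1) * t (m+1) := by
      have := up_succ t 0 (m+1); simpa using this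
    rcases Nat.lt_or_ge i (m+1) with hi | hi
    · have IH' := IH (fun i h => hb i (by omega)) (fun i j h1 h2 => hc i j h1 (by omega)) i h1
        (by omega)
      have hcm : t (i-1) * t (m+1) = t (m+1) * t (i-1) :=
        (hc (i-1) (m+1) (by omega) (by omega)).eq
      calc t i * up t 0 (m+2) = t i * up t 0 (m+1) * t (m+1) := by rw [hu, ← mul_assoc]
        _ = up t 0 (m+1) * t (i-1) * t (m+1) := by rw [IH']
        _ = up t 0 (m+1) * (t (i-1) * t (m+1)) := by rw [mul_assoc]
        _ = up t 0 (m+1) * (t (m+1) * t (i-1)) := by rw [hcm]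
        _ = up t 0 (m+2) * t (i-1) := by rw [hu]; group
    · have hi' : i = m + 1 := by omega
      subst hi'
      rcases Nat.eq_zero_or_pos m with hm | hm
      · subst hm
        have e : up t 0 2 = t 0 * t 1 := by
          rw [up_succ t 0 1, up_succ t 0 0]
          simp
        have hb0 := hb 0 (by omega)
        simp only [Nat.add_sub_cancel, e]
        calc t 1 * (t 0 * t 1) = t 0 * t 1 * t 0 := by rw [← mul_assoc]; exact (hb0).symm
          _ = t 0 * t 1 * t 0 := rfl
      · have hu2 : up t 0 (m+1) = up t 0 m * t m := by
          have := up_succ t 0 m; simpa using this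
        have hcm : Commute (t (m+1)) (up t 0 m) :=
          comm_up (fun j hj => by simpa using (hc j (m+1) (by omega) (by omega)).symm)
        have hbm := hb m (by omega)
        simp only [Nat.add_sub_cancel]
        calc t (m+1) * up t 0 (m+2)
            = t (m+1) * up t 0 m * t m * t (m+1) := by rw [hu, hu2]; group
          _ = up t 0 m * t (m+1) * t m * t (m+1) := by
              have : t (m+1) * up t 0 m = up t 0 m * t (m+1) := hcm.eq
              rw [this]
          _ = up t 0 m * (t (m+1) * t m * t (m+1)) := by group
          _ = up t 0 m * (t m * t (m+1) * t m) := by rw [hbm]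
          _ = up t 0 m * t m * t (m+1) * t m := by group
          _ = up t 0 (m+2) * t m := by rw [← hu2, ← hu]


lemma up_congr {t s : ℕ → G} {a b m : ℕ} (h : ∀ j < m, t (a+j) = s (b+j)) :
    up t a m = up s b m := by
  unfold up; congr 1
  apply List.map_congr_left
  intro j hj
  simp only [List.mem_range] at hj
  exact h j hj

lemma dwn_congr {t s : ℕ → G} {a b m : ℕ} (h : ∀ j < m, t (a-j) = s (b-j)) :
    dwn t a m = dwn s b m := by
  unfold dwn; congr 1
  apply List.map_congr_left
  intro j hj
  simp only [List.mem_range] at hj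
  exact h j hj

lemma factorD_eq (n k : ℕ) (t : ℕ → G) :
    factorD n t k = up t k (n-2-k) * t (n-2) * t (n-1) * dwn t (n-3) (n-2-k) := rfl

structure IsD (n : ℕ) (t : ℕ → G) : Prop where
  bc : ∀ i, i + 3 ≤ n → Br (t i) (t (i+1))
  bf : ∀ i, i + 3 = n → Br (t i) (t (n-1))
  cc : ∀ i j, i + 2 ≤ j → j ≤ n - 2 → Commute (t i) (t j)
  cf : ∀ i, i + 1 ≤ n - 1 → i + 3 ≠ n → Commute (t i) (t (n-1))

lemma IsD.shift {n : ℕ} {t : ℕ → G} (h : IsD n t) (hn : 3 ≤ n) :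
    IsD (n-1) (fun i => t (i+1)) := by
  constructor
  · intro i hi; exact h.bc (i+1) (by omega)
  · intro i hi
    have e : n - 1 - 1 + 1 = n - 1 := by omega
    simpa [e] using h.bf (i+1) (by omega)
  · intro i j h1 h2; exact h.cc (i+1) (j+1) (by omega) (by omega)
  · intro i h1 h2
    have e : n - 1 - 1 + 1 = n - 1 := by omega
    simpa [e] using h.cf (i+1) (by omega) (by omega)

lemma key1 {s u v : G} (hsu : Br s u) (hsv : Br s v) (huv : Commute u v) :
    s*u*v*s*u = v*s*u*v*s := by
  calc s*u*v*s*u = s*(u*v)*(s*u) := by group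
    _ = s*(v*u)*(s*u) := by rw [huv.eq]
    _ = (s*v)*(u*s*u) := by group
    _ = (s*v)*(s*u*s) := by rw [← hsu]
    _ = (s*v*s)*(u*s) := by group
    _ = (v*s*v)*(u*s) := by rw [hsv]
    _ = v*s*(v*u)*s := by group
    _ = v*s*(u*v)*s := by rw [← huv.eq]
    _ = v*s*u*v*s := by group

lemma key2 {x u v : G} (hxu : Br x u) (hxv : Br x v) (huv : Commute u v) :
    u*v*x*u*v*x = x*u*v*x*u*v := by
  have h1 : x*u*v*x*u*v = v*x*u*v*x*v := by
    calc x*u*v*x*u*v = (x*u*v*x*u)*v := by group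
      _ = (v*x*u*v*x)*v := by rw [key1 hxu hxv huv]
      _ = v*x*u*v*x*v := by group
  have h2 : u*v*x*u*v*x = v*x*u*v*x*v := by
    calc u*v*x*u*v*x = (u*v)*(x*u*v*x) := by group
      _ = (v*u)*(x*u*v*x) := by rw [huv.eq]
      _ = v*(u*x*u)*(v*x) := by group
      _ = v*(x*u*x)*(v*x) := by rw [← hxu]
      _ = v*x*u*(x*v*x) := by group
      _ = v*x*u*(v*x*v) := by rw [hxv]
      _ = v*x*u*v*x*v := by group
  exact h2.trans h1.symm

lemma comm_factorD {n k : ℕ} (hn : 1 ≤ n) {t : ℕ → G} {x : G}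
    (h : ∀ j < n, Commute x (t j)) : Commute x (factorD n t k) := by
  rw [factorD_eq]
  exact (((comm_up (fun j hj => h (k+j) (by omega))).mul_right (h (n-2) (by omega))).mul_right
    (h (n-1) (by omega))).mul_right (comm_dwn (fun j hj => h (n-3-j) (by omega)))

lemma factorD_nest {n : ℕ} (hn : 3 ≤ n) (t : ℕ → G) :
    factorD n t 0 = t 0 * factorD (n-1) (fun i => t (i+1)) 0 * t 0 := by
  have e2 : n - 2 = (n-3) + 1 := by omega
  have h1 : up t 0 (n-2) = t 0 * up t 1 (n-3) := by
    rw [e2, up_succ' t 0 (n-3)]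
  have h2 : dwn t (n-3) (n-2) = dwn t (n-3) (n-3) * t 0 := by
    rw [e2, dwn_succ t (n-3) (n-3)]
    simp
  have h3 : up (fun i => t (i+1)) 0 (n-3) = up t 1 (n-3) := by
    apply up_congr; intro j hj; show t _ = t _; congr 1; omega
  have h4 : dwn (fun i => t (i+1)) (n-4) (n-3) = dwn t (n-3) (n-3) := by
    apply dwn_congr; intro j hj; show t _ = t _; congr 1; omega
  have e3 : (n-1) - 2 = n - 3 := by omega
  have e4 : (n-1) - 1 = n - 2 := by omega
  have e5 : (n-1) - 3 = n - 4 := by omega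
  have e6 : n - 3 + 1 = n - 2 := by omega
  have e7 : n - 2 + 1 = n - 1 := by omega
  rw [factorD_eq n 0 t, factorD_eq (n-1) 0 (fun i => t (i+1))]
  simp only [Nat.sub_zero, e3, e4, e5, h1, h2, h3, h4, e6, e7]
  group

lemma factorD_shift {n k : ℕ} (hn : 3 ≤ n) (t : ℕ → G) :
    factorD n t (k+1) = factorD (n-1) (fun i => t (i+1)) k := by
  have h3 : up (fun i => t (i+1)) k (n-3-k) = up t (k+1) (n-3-k) := by
    apply up_congr; intro j hj; show t _ = t _; congr 1; omega
  have h4 : dwn (fun i => t (i+1)) (n-4) (n-3-k) = dwn t (n-3) (n-3-k) := by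
    apply dwn_congr; intro j hj; show t _ = t _; congr 1; omega
  have e2 : n - 2 - (k+1) = n - 3 - k := by omega
  have e3 : (n-1) - 2 - k = n - 3 - k := by omega
  have e3' : (n-1) - 2 = n - 3 := by omega
  have e4 : (n-1) - 1 = n - 2 := by omega
  have e5 : (n-1) - 3 = n - 4 := by omega
  have e6 : n - 3 + 1 = n - 2 := by omega
  have e7 : n - 2 + 1 = n - 1 := by omega
  rw [factorD_eq n (k+1) t, factorD_eq (n-1) k (fun i => t (i+1))]
  simp only [e2, e3, e3', e4, e5, h3, h4, e6, e7]

lemma deltaDin_peel {n : ℕ} (hn : 2 ≤ n) (t : ℕ → G) :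
    deltaDin n t = factorD n t 0 * deltaDin (n-1) (fun i => t (i+1)) := by
  have e : n - 1 = (n-2) + 1 := by omega
  have L : ((List.range (n-1)).map (factorD n t)).prod
      = factorD n t 0 * ((List.range (n-2)).map (fun k => factorD n t (k+1))).prod := by
    rw [e, List.range_succ_eq_map, List.map_cons, List.prod_cons, List.map_map]
    rfl
  show ((List.range (n-1)).map (factorD n t)).prod = _
  rw [L]
  congr 1
  show _ = ((List.range ((n-1)-1)).map (factorD (n-1) (fun i => t (i+1)))).prod
  rw [show (n-1) - 1 = n - 2 from by omega]
  congr 1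
  apply List.map_congr_left
  intro k hk
  simp only [List.mem_range] at hk
  exact factorD_shift (by omega) t

lemma deltaDin_small {n : ℕ} (hn : n ≤ 1) (t : ℕ → G) : deltaDin n t = 1 := by
  interval_cases n <;> simp [deltaDin]

lemma comm_deltaDin {n : ℕ} {t : ℕ → G} {x : G}
    (h : 2 ≤ n → ∀ j < n, Commute x (t j)) : Commute x (deltaDin n t) := by
  rcases Nat.lt_or_ge n 2 with hn | hn
  · rw [deltaDin_small (by omega) t]; exact Commute.one_right x
  · apply Commute.list_prod_right
    intro y hy
    simp only [List.mem_map, List.mem_range] at hy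
    obtain ⟨k, hk, rfl⟩ := hy
    exact comm_factorD (by omega) (h hn)


lemma Pstep {x y R : G} (hxy : Br x y) (hxR : Commute x R) (hP : y*R*y*R = R*y*R*y) :
    y*R*y*x*(y*R*y)*x = x*(y*R*y)*x*(y*R*y) := by
  have hrhs : x*(y*R*y)*x*(y*R*y) = (x*y*x)*(R*y*x*R*y) := by
    calc x*(y*R*y)*x*(y*R*y) = x*y*R*(y*x*y)*R*y := by group
      _ = x*y*R*(x*y*x)*R*y := by rw [← hxy]
      _ = x*y*(R*x)*(y*x*R*y) := by group
      _ = x*y*(x*R)*(y*x*R*y) := by rw [← hxR.eq]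
      _ = (x*y*x)*(R*y*x*R*y) := by group
  calc y*R*y*x*(y*R*y)*x
      = y*R*(y*x*y)*R*(y*x) := by group
    _ = y*R*(x*y*x)*R*(y*x) := by rw [← hxy]
    _ = y*(R*x)*(y*x*R*y*x) := by group
    _ = y*(x*R)*(y*x*R*y*x) := by rw [← hxR.eq]
    _ = y*x*R*y*(x*R)*(y*x) := by group
    _ = y*x*R*y*(R*x)*(y*x) := by rw [hxR.eq]
    _ = y*x*R*(y*R)*(x*y*x) := by group
    _ = y*x*R*(y*R)*(y*x*y) := by rw [hxy]
    _ = y*x*(R*y*R*y)*(x*y) := by group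
    _ = y*x*(y*R*y*R)*(x*y) := by rw [← hP]
    _ = (y*x*y)*R*y*(R*x)*y := by group
    _ = (y*x*y)*R*y*(x*R)*y := by rw [← hxR.eq]
    _ = (y*x*y)*(R*y*x*R*y) := by group
    _ = (x*y*x)*(R*y*x*R*y) := by rw [← hxy]
    _ = x*(y*R*y)*x*(y*R*y) := hrhs.symm

lemma Plem : ∀ m, 2 ≤ m → ∀ (t : ℕ → G) (x : G), IsD m t →
    Br x (t 0) → (m = 2 → Br x (t 1)) →
    (3 ≤ m → ∀ j, 1 ≤ j → j ≤ m - 1 → Commute x (t j)) →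
    factorD m t 0 * x * factorD m t 0 * x = x * factorD m t 0 * x * factorD m t 0 := by
  intro m hm
  induction m, hm using Nat.le_induction with
  | base =>
    intro t x h hb0 hb1 _
    have hf : factorD 2 t 0 = t 0 * t 1 := by
      rw [factorD_eq]; simp
    have huv : Commute (t 0) (t 1) := by simpa using h.cf 0 (by omega) (by omega)
    have k := key2 hb0 (hb1 rfl) huv
    rw [hf]
    calc t 0 * t 1 * x * (t 0 * t 1) * x = t 0*t 1*x*t 0*t 1*x := by group
      _ = x*t 0*t 1*x*t 0*t 1 := k
      _ = x * (t 0 * t 1) * x * (t 0 * t 1) := by group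
  | succ m hm IH =>
    intro t x h hb0 hb1 hxc
    have h' : IsD m (fun i => t (i+1)) := by simpa using h.shift (by omega)
    have hR : Commute x (factorD m (fun i => t (i+1)) 0) := by
      apply comm_factorD (by omega)
      intro j hj
      exact hxc (by omega) (j+1) (by omega) (by omega)
    have hb0' : Br (t 0) ((fun i => t (i+1)) 0) := h.bc 0 (by omega)
    have hb1' : m = 2 → Br (t 0) ((fun i => t (i+1)) 1) := by
      intro hm2
      subst hm2
      simpa using h.bf 0 (by omega)
    have hxc' : 3 ≤ m → ∀ j, 1 ≤ j → j ≤ m - 1 → Commute (t 0) ((fun i => t (i+1)) j) := by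
      intro h3 j hj1 hj2
      show Commute (t 0) (t (j+1))
      rcases Nat.lt_or_ge (j+1) m with hc | hc
      · exact h.cc 0 (j+1) (by omega) (by omega)
      · have : j + 1 = m := by omega
        rw [this]
        have := h.cf 0 (by omega) (by omega)
        simpa using this
    have hP := IH (fun i => t (i+1)) (t 0) h' hb0' hb1' hxc'
    have hnest : factorD (m+1) t 0 = t 0 * factorD m (fun i => t (i+1)) 0 * t 0 := by
      simpa using factorD_nest (show 3 ≤ m+1 by omega) t
    rw [hnest]
    have hps := Pstep (x := x) (y := t 0) (R := factorD m (fun i => t (i+1)) 0) hb0 hR hP.symm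
    exact hps

lemma r0_u {n : ℕ} (hn : 3 ≤ n) {t : ℕ → G} (h : IsD n t) :
    factorD n t 0 * t (n-2) = t (n-1) * factorD n t 0 := by
  have hr : factorD n t 0
      = up t 0 (n-3) * t (n-3) * t (n-2) * t (n-1) * (t (n-3) * dwn t (n-4) (n-3)) := by
    rw [factorD_eq]
    simp only [Nat.sub_zero]
    rw [show n-2 = (n-3)+1 from by omega, up_succ t 0 (n-3), dwn_succ' t (n-3) (n-3)]
    rw [show (n-3)-1 = n-4 from by omega]
    simp only [Nat.zero_add]
  have hsu : Br (t (n-3)) (t (n-2)) := by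
    have := h.bc (n-3) (by omega)
    rwa [show n-3+1 = n-2 from by omega] at this
  have hsv : Br (t (n-3)) (t (n-1)) := h.bf (n-3) (by omega)
  have huv : Commute (t (n-2)) (t (n-1)) := h.cf (n-2) (by omega) (by omega)
  have hA1v : Commute (t (n-1)) (up t 0 (n-3)) :=
    comm_up (fun j hj => by simpa using (h.cf j (by omega) (by omega)).symm)
  have hB1u : Commute (t (n-2)) (dwn t (n-4) (n-3)) :=
    comm_dwn (fun j hj => (h.cc (n-4-j) (n-2) (by omega) (by omega)).symm)
  calc factorD n t 0 * t (n-2)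
      = up t 0 (n-3) * (t (n-3) * t (n-2) * t (n-1) * t (n-3))
          * (dwn t (n-4) (n-3) * t (n-2)) := by rw [hr]; group
    _ = up t 0 (n-3) * (t (n-3) * t (n-2) * t (n-1) * t (n-3))
          * (t (n-2) * dwn t (n-4) (n-3)) := by rw [← hB1u.eq]
    _ = up t 0 (n-3) * (t (n-3) * t (n-2) * t (n-1) * t (n-3) * t (n-2))
          * dwn t (n-4) (n-3) := by group
    _ = up t 0 (n-3) * (t (n-1) * t (n-3) * t (n-2) * t (n-1) * t (n-3))
          * dwn t (n-4) (n-3) := by rw [key1 hsu hsv huv]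
    _ = up t 0 (n-3) * t (n-1)
          * (t (n-3) * t (n-2) * t (n-1) * t (n-3) * dwn t (n-4) (n-3)) := by group
    _ = t (n-1) * up t 0 (n-3)
          * (t (n-3) * t (n-2) * t (n-1) * t (n-3) * dwn t (n-4) (n-3)) := by rw [hA1v.eq]
    _ = t (n-1) * factorD n t 0 := by rw [hr]; group

lemma r0_v {n : ℕ} (hn : 3 ≤ n) {t : ℕ → G} (h : IsD n t) :
    factorD n t 0 * t (n-1) = t (n-2) * factorD n t 0 := by
  have hr : factorD n t 0
      = up t 0 (n-3) * t (n-3) * t (n-2) * t (n-1) * (t (n-3) * dwn t (n-4) (n-3)) := by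
    rw [factorD_eq]
    simp only [Nat.sub_zero]
    rw [show n-2 = (n-3)+1 from by omega, up_succ t 0 (n-3), dwn_succ' t (n-3) (n-3)]
    rw [show (n-3)-1 = n-4 from by omega]
    simp only [Nat.zero_add]
  have hsu : Br (t (n-3)) (t (n-2)) := by
    have := h.bc (n-3) (by omega)
    rwa [show n-3+1 = n-2 from by omega] at this
  have hsv : Br (t (n-3)) (t (n-1)) := h.bf (n-3) (by omega)
  have huv : Commute (t (n-2)) (t (n-1)) := h.cf (n-2) (by omega) (by omega)
  have hA1u : Commute (t (n-2)) (up t 0 (n-3)) :=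
    comm_up (fun j hj => by simpa using (h.cc j (n-2) (by omega) (by omega)).symm)
  have hB1v : Commute (t (n-1)) (dwn t (n-4) (n-3)) :=
    comm_dwn (fun j hj => (h.cf (n-4-j) (by omega) (by omega)).symm)
  calc factorD n t 0 * t (n-1)
      = up t 0 (n-3) * (t (n-3) * t (n-2) * t (n-1) * t (n-3))
          * (dwn t (n-4) (n-3) * t (n-1)) := by rw [hr]; group
    _ = up t 0 (n-3) * (t (n-3) * t (n-2) * t (n-1) * t (n-3))
          * (t (n-1) * dwn t (n-4) (n-3)) := by rw [← hB1v.eq]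
    _ = up t 0 (n-3) * (t (n-3) * (t (n-2) * t (n-1)) * (t (n-3) * t (n-1)))
          * dwn t (n-4) (n-3) := by group
    _ = up t 0 (n-3) * (t (n-3) * (t (n-1) * t (n-2)) * (t (n-3) * t (n-1)))
          * dwn t (n-4) (n-3) := by rw [huv.eq]
    _ = up t 0 (n-3) * (t (n-3) * t (n-1) * t (n-2) * t (n-3) * t (n-1))
          * dwn t (n-4) (n-3) := by group
    _ = up t 0 (n-3) * (t (n-2) * t (n-3) * t (n-1) * t (n-2) * t (n-3))
          * dwn t (n-4) (n-3) := by rw [key1 hsv hsu huv.symm]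
    _ = up t 0 (n-3) * t (n-2)
          * (t (n-3) * (t (n-1) * t (n-2)) * t (n-3) * dwn t (n-4) (n-3)) := by group
    _ = t (n-2) * up t 0 (n-3)
          * (t (n-3) * (t (n-1) * t (n-2)) * t (n-3) * dwn t (n-4) (n-3)) := by rw [hA1u.eq]
    _ = t (n-2) * up t 0 (n-3)
          * (t (n-3) * (t (n-2) * t (n-1)) * t (n-3) * dwn t (n-4) (n-3)) := by rw [← huv.eq]
    _ = t (n-2) * factorD n t 0 := by rw [hr]; group

lemma r0_comm_mid {n : ℕ} (hn : 3 ≤ n) {t : ℕ → G} (h : IsD n t) :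
    ∀ i, 1 ≤ i → i ≤ n-3 → factorD n t 0 * t i = t i * factorD n t 0 := by
  intro i h1 h2
  have hB : dwn t (n-3) ((n-3)+1) * t i = t (i-1) * dwn t (n-3) ((n-3)+1) :=
    dwn_conj (fun i hi => h.bc i (by omega))
      (fun i j hi hj => h.cc i j hi (by omega)) i h1 h2
  have hA : t i * up t 0 ((n-3)+1) = up t 0 ((n-3)+1) * t (i-1) :=
    up_conj (fun i hi => h.bc i (by omega))
      (fun i j hi hj => h.cc i j hi (by omega)) i h1 h2
  rw [show (n-3)+1 = n-2 from by omega] at hB hA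
  have hu : Commute (t (i-1)) (t (n-2)) := h.cc (i-1) (n-2) (by omega) (by omega)
  have hv : Commute (t (i-1)) (t (n-1)) := h.cf (i-1) (by omega) (by omega)
  calc factorD n t 0 * t i
      = up t 0 (n-2) * t (n-2) * t (n-1) * (dwn t (n-3) (n-2) * t i) := by
        rw [factorD_eq]; simp only [Nat.sub_zero]; group
    _ = up t 0 (n-2) * t (n-2) * t (n-1) * (t (i-1) * dwn t (n-3) (n-2)) := by rw [hB]
    _ = up t 0 (n-2) * t (n-2) * (t (n-1) * t (i-1)) * dwn t (n-3) (n-2) := by group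
    _ = up t 0 (n-2) * t (n-2) * (t (i-1) * t (n-1)) * dwn t (n-3) (n-2) := by rw [← hv.eq]
    _ = up t 0 (n-2) * (t (n-2) * t (i-1)) * t (n-1) * dwn t (n-3) (n-2) := by group
    _ = up t 0 (n-2) * (t (i-1) * t (n-2)) * t (n-1) * dwn t (n-3) (n-2) := by rw [← hu.eq]
    _ = (up t 0 (n-2) * t (i-1)) * (t (n-2) * t (n-1) * dwn t (n-3) (n-2)) := by group
    _ = (t i * up t 0 (n-2)) * (t (n-2) * t (n-1) * dwn t (n-3) (n-2)) := by rw [← hA]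
    _ = t i * factorD n t 0 := by rw [factorD_eq]; simp only [Nat.sub_zero]; group

lemma assemble {r d a b c : G} (h1 : d * a = b * d) (h2 : r * b = c * r) :
    r * d * a = c * (r * d) := by
  calc r*d*a = r*(d*a) := by group
    _ = r*(b*d) := by rw [h1]
    _ = (r*b)*d := by group
    _ = (c*r)*d := by rw [h2]
    _ = c*(r*d) := by group

def sig (n i : ℕ) : ℕ :=
  if n % 2 = 1 then (if i = n-2 then n-1 else if i = n-1 then n-2 else i) else i

theorem main_conj : ∀ n, 2 ≤ n → ∀ (t : ℕ → G), IsD n t →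
    ∀ i < n, deltaDin n t * t i = t (sig n i) * deltaDin n t := by
  intro n hn
  induction n, hn using Nat.le_induction with
  | base =>
    intro t h i hi
    have hδ : deltaDin 2 t = t 0 * t 1 := by
      rw [deltaDin_peel (by omega) t, deltaDin_small (by omega)]
      rw [factorD_eq]
      simp
    have huv : Commute (t 0) (t 1) := by simpa using h.cf 0 (by omega) (by omega)
    have hs : sig 2 i = i := by simp [sig]
    rw [hδ, hs]
    interval_cases i
    · rw [mul_assoc, ← huv.eq]
    · calc t 0 * t 1 * t 1 = t 1 * t 0 * t 1 := by rw [huv.eq]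
        _ = t 1 * (t 0 * t 1) := by group
  | succ n hn IH =>
    intro t h i hi
    have h' : IsD n (fun j => t (j+1)) := by simpa using h.shift (by omega)
    have hpeel : deltaDin (n+1) t = factorD (n+1) t 0 * deltaDin n (fun j => t (j+1)) := by
      rw [deltaDin_peel (n := n+1) (by omega) t, Nat.add_sub_cancel]
    have IH' := IH (fun j => t (j+1)) h'
    rcases eq_or_ne i 0 with h0 | h0
    · -- i = 0
      subst h0
      have hpeel2 : deltaDin n (fun j => t (j+1))
          = factorD n (fun j => t (j+1)) 0 * deltaDin (n-1) (fun j => t (j+1+1)) := by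
        simpa using deltaDin_peel (n := n) (by omega) (fun j => t (j+1))
      have hδ'' : Commute (t 0) (deltaDin (n-1) (fun j => t (j+1+1))) := by
        apply comm_deltaDin
        intro h2 j hj
        show Commute (t 0) (t (j+1+1))
        rcases Nat.lt_or_ge (j+2) n with hc | hc
        · have := h.cc 0 (j+2) (by omega) (by omega)
          simpa [show j+2 = j+1+1 from by omega] using this
        · have he : j + 1 + 1 = n := by omega
          rw [he]
          have := h.cf 0 (by omega) (by omega)
          simpa using this
      have hb0' : Br (t 0) ((fun j => t (j+1)) 0) := h.bc 0 (by omega)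
      have hb1' : n = 2 → Br (t 0) ((fun j => t (j+1)) 1) := by
        intro hn2; subst hn2; simpa using h.bf 0 (by omega)
      have hxc' : 3 ≤ n → ∀ j, 1 ≤ j → j ≤ n - 1 → Commute (t 0) ((fun j => t (j+1)) j) := by
        intro h3 j hj1 hj2
        show Commute (t 0) (t (j+1))
        rcases Nat.lt_or_ge (j+1) n with hc | hc
        · exact h.cc 0 (j+1) (by omega) (by omega)
        · have he : j + 1 = n := by omega
          rw [he]
          have := h.cf 0 (by omega) (by omega)
          simpa using this
      have hP := Plem n (by omega) (fun j => t (j+1)) (t 0) h' hb0' hb1' hxc'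
      have hnest : factorD (n+1) t 0 = t 0 * factorD n (fun j => t (j+1)) 0 * t 0 := by
        simpa using factorD_nest (show 3 ≤ n+1 by omega) t
      have hsig : sig (n+1) 0 = 0 := by unfold sig; split_ifs <;> omega
      rw [hpeel, hpeel2, hnest, hsig]
      calc t 0 * factorD n (fun j => t (j+1)) 0 * t 0
            * (factorD n (fun j => t (j+1)) 0 * deltaDin (n-1) (fun j => t (j+1+1))) * t 0
          = t 0 * (factorD n (fun j => t (j+1)) 0 * t 0 * factorD n (fun j => t (j+1)) 0)
            * (deltaDin (n-1) (fun j => t (j+1+1)) * t 0) := by group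
        _ = t 0 * (factorD n (fun j => t (j+1)) 0 * t 0 * factorD n (fun j => t (j+1)) 0)
            * (t 0 * deltaDin (n-1) (fun j => t (j+1+1))) := by rw [← hδ''.eq]
        _ = t 0 * (factorD n (fun j => t (j+1)) 0 * t 0 * factorD n (fun j => t (j+1)) 0 * t 0)
            * deltaDin (n-1) (fun j => t (j+1+1)) := by group
        _ = t 0 * (t 0 * factorD n (fun j => t (j+1)) 0 * t 0 * factorD n (fun j => t (j+1)) 0)
            * deltaDin (n-1) (fun j => t (j+1+1)) := by rw [hP]
        _ = t 0 * (t 0 * factorD n (fun j => t (j+1)) 0 * t 0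
            * (factorD n (fun j => t (j+1)) 0 * deltaDin (n-1) (fun j => t (j+1+1)))) := by group
    · have hi1 : 1 ≤ i := by omega
      by_cases hA : i ≤ n - 2
      · -- middle generators
        have hIH : deltaDin n (fun j => t (j+1)) * t i = t i * deltaDin n (fun j => t (j+1)) := by
          have h1 := IH' (i-1) (by omega)
          have hsg : sig n (i-1) = i-1 := by unfold sig; split_ifs <;> omega
          rw [hsg] at h1
          simpa [show i-1+1 = i from by omega] using h1
        have hr0 : factorD (n+1) t 0 * t i = t i * factorD (n+1) t 0 :=
          r0_comm_mid (by omega) h i hi1 (by omega)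
        have hsig : sig (n+1) i = i := by unfold sig; split_ifs <;> omega
        rw [hpeel, hsig]
        exact assemble hIH hr0
      · rcases eq_or_ne i n with hin | hin
        · -- i = n : the generator v
          rw [hin]
          have hIH := IH' (n-1) (by omega)
          rcases Nat.mod_two_eq_zero_or_one n with hp | hp
          · have hsg : sig n (n-1) = n-1 := by unfold sig; split_ifs <;> omega
            rw [hsg] at hIH
            have hIH2 : deltaDin n (fun j => t (j+1)) * t n
                = t n * deltaDin n (fun j => t (j+1)) := by
              simpa [show n-1+1 = n from by omega] using hIH
            have hr : factorD (n+1) t 0 * t n = t (n-1) * factorD (n+1) t 0 := by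
              simpa using r0_v (show 3 ≤ n+1 by omega) h
            have hsig : sig (n+1) n = n-1 := by unfold sig; split_ifs <;> omega
            rw [hpeel, hsig]
            exact assemble hIH2 hr
          · have hsg : sig n (n-1) = n-2 := by unfold sig; split_ifs <;> omega
            rw [hsg] at hIH
            have hIH2 : deltaDin n (fun j => t (j+1)) * t n
                = t (n-1) * deltaDin n (fun j => t (j+1)) := by
              simpa [show n-2+1 = n-1 from by omega, show n-1+1 = n from by omega] using hIH
            have hr : factorD (n+1) t 0 * t (n-1) = t n * factorD (n+1) t 0 := by
              simpa using r0_u (show 3 ≤ n+1 by omega) h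
            have hsig : sig (n+1) n = n := by unfold sig; split_ifs <;> omega
            rw [hpeel, hsig]
            exact assemble hIH2 hr
        · -- i = n-1 : the generator u
          have hin' : i = n-1 := by omega
          rw [hin']
          have hIH := IH' (n-2) (by omega)
          rcases Nat.mod_two_eq_zero_or_one n with hp | hp
          · have hsg : sig n (n-2) = n-2 := by unfold sig; split_ifs <;> omega
            rw [hsg] at hIH
            have hIH2 : deltaDin n (fun j => t (j+1)) * t (n-1)
                = t (n-1) * deltaDin n (fun j => t (j+1)) := by
              simpa [show n-2+1 = n-1 from by omega] using hIH
            have hr : factorD (n+1) t 0 * t (n-1) = t n * factorD (n+1) t 0 := by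
              simpa using r0_u (show 3 ≤ n+1 by omega) h
            have hsig : sig (n+1) (n-1) = n := by unfold sig; split_ifs <;> omega
            rw [hpeel, hsig]
            exact assemble hIH2 hr
          · have hsg : sig n (n-2) = n-1 := by unfold sig; split_ifs <;> omega
            rw [hsg] at hIH
            have hIH2 : deltaDin n (fun j => t (j+1)) * t (n-1)
                = t n * deltaDin n (fun j => t (j+1)) := by
              simpa [show n-2+1 = n-1 from by omega, show n-1+1 = n from by omega] using hIH
            have hr : factorD (n+1) t 0 * t n = t (n-1) * factorD (n+1) t 0 := by
              simpa using r0_v (show 3 ≤ n+1 by omega) h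
            have hsig : sig (n+1) (n-1) = n-1 := by unfold sig; split_ifs <;> omega
            rw [hpeel, hsig]
            exact assemble hIH2 hr

lemma up_const (g : G) (a : ℕ) : ∀ m, up (fun _ => g) a m = g ^ m := by
  intro m
  induction m with
  | zero => simp
  | succ m IH => rw [up_succ, IH, pow_succ]

lemma dwn_const (g : G) (b : ℕ) : ∀ m, dwn (fun _ => g) b m = g ^ m := by
  intro m
  induction m with
  | zero => simp
  | succ m IH => rw [dwn_succ, IH, pow_succ]

lemma factorD_congr {t s : ℕ → G} {n k : ℕ} (hk : k < n - 1) (h : ∀ j < n, t j = s j) :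
    factorD n t k = factorD n s k := by
  rw [factorD_eq, factorD_eq, up_congr (b := k) (fun j hj => h (k+j) (by omega)),
    dwn_congr (b := n-3) (fun j hj => h (n-3-j) (by omega)), h (n-2) (by omega),
    h (n-1) (by omega)]

lemma deltaDin_congr {t s : ℕ → G} {n : ℕ} (h : ∀ j < n, t j = s j) :
    deltaDin n t = deltaDin n s := by
  unfold deltaDin
  congr 1
  apply List.map_congr_left
  intro k hk
  simp only [List.mem_range] at hk
  exact factorD_congr hk h

lemma hom_factorD {H : Type} [Group H] (f : G →* H) (n k : ℕ) (t : ℕ → G) :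
    f (factorD n t k) = factorD n (fun i => f (t i)) k := by
  simp [factorD, map_list_prod, List.map_map, Function.comp_def]

lemma hom_deltaDin {H : Type} [Group H] (f : G →* H) (n : ℕ) (t : ℕ → G) :
    f (deltaDin n t) = deltaDin n (fun i => f (t i)) := by
  simp only [deltaDin, map_list_prod, List.map_map]
  congr 1
  apply List.map_congr_left
  intro k hk
  simp only [Function.comp_apply]
  exact hom_factorD f n k t

lemma deltaDin_const : ∀ n, 2 ≤ n → ∀ g : G, deltaDin n (fun _ => g) = g ^ (n*(n-1)) := by
  intro n hn
  induction n, hn using Nat.le_induction with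
  | base =>
    intro g
    rw [deltaDin_peel (by omega) (fun _ => g), deltaDin_small (by omega), factorD_eq]
    simp [pow_two]
  | succ n hn IH =>
    intro g
    have hpeel : deltaDin (n+1) (fun _ => g)
        = factorD (n+1) (fun _ => g) 0 * deltaDin n (fun _ => g) := by
      rw [deltaDin_peel (n := n+1) (by omega) (fun _ => g), Nat.add_sub_cancel]
    rw [hpeel, IH g, factorD_eq]
    simp only [Nat.sub_zero, up_const, dwn_const]
    have e1 : (n+1) - 2 = n - 1 := by omega
    rw [e1]
    have : g^(n-1) * g * g * g^(n-1) * g^(n*(n-1))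
        = g^((n-1)+1+1+((n-1)+n*(n-1))) := by
      simp only [pow_add, pow_succ, pow_one]
      group
    rw [this]
    congr 1
    obtain ⟨m, rfl⟩ : ∃ m, n = m + 2 := ⟨n-2, by omega⟩
    simp only [show m+2-1 = m+1 from rfl, show m+2+1-1 = m+2 from rfl]
    ring

lemma gD_rel_one {n : ℕ} {r : FreeGroup (Fin n)} (hr : r ∈ ArelD n) :
    PresentedGroup.mk (ArelD n) r = 1 :=
  (QuotientGroup.eq_one_iff r).mpr (Subgroup.subset_normalClosure hr)

lemma gD_br {n i j : ℕ} (hij : i < j) (hj : j < n) (hadj : adjD n i j) :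
    Br (gD n i) (gD n j) := by
  have hi : i < n := lt_trans hij hj
  have hr : braidRel (FreeGroup.of (⟨i, hi⟩ : Fin n)) (FreeGroup.of (⟨j, hj⟩ : Fin n))
      ∈ ArelD n := ⟨⟨i, hi⟩, ⟨j, hj⟩, hij, Or.inl ⟨hadj, rfl⟩⟩
  have h1 := gD_rel_one hr
  rw [braidRel] at h1
  simp only [map_mul, map_inv] at h1
  have h2 : gD n i = PresentedGroup.mk (ArelD n) (FreeGroup.of ⟨i, hi⟩) := by
    simp only [gD, dif_pos hi]; rfl
  have h3 : gD n j = PresentedGroup.mk (ArelD n) (FreeGroup.of ⟨j, hj⟩) := by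
    simp only [gD, dif_pos hj]; rfl
  rw [Br, h2, h3]
  exact mul_inv_eq_one.mp h1

lemma gD_comm {n i j : ℕ} (hij : i < j) (hj : j < n) (hnadj : ¬ adjD n i j) :
    Commute (gD n i) (gD n j) := by
  have hi : i < n := lt_trans hij hj
  have hr : commRel (FreeGroup.of (⟨i, hi⟩ : Fin n)) (FreeGroup.of (⟨j, hj⟩ : Fin n))
      ∈ ArelD n := ⟨⟨i, hi⟩, ⟨j, hj⟩, hij, Or.inr ⟨hnadj, rfl⟩⟩
  have h1 := gD_rel_one hr
  rw [commRel] at h1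
  simp only [map_mul, map_inv] at h1
  have h2 : gD n i = PresentedGroup.mk (ArelD n) (FreeGroup.of ⟨i, hi⟩) := by
    simp only [gD, dif_pos hi]; rfl
  have h3 : gD n j = PresentedGroup.mk (ArelD n) (FreeGroup.of ⟨j, hj⟩) := by
    simp only [gD, dif_pos hj]; rfl
  rw [Commute, SemiconjBy, h2, h3]
  exact mul_inv_eq_one.mp h1

end ArtinAux

end AUX

/-- For `n ≥ 4`, if `φ_Z` is a cyclic endomorphism of `A_Z[D_n] = A[D_n]/Z(A[D_n])`
with `φ_Z(t_{Z,i}) = g_Z` for all `i`, then `g_Z^{κ n (n-1)} = 1`, where `κ = 2` if `n`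
is odd and `κ = 1` if `n` is even. -/
theorem cyclic_endomorphism_finite_order (n : ℕ) (hn : 4 ≤ n)
    (φZ : AZD n →* AZD n) (gZ : AZD n)
    (hφ : ∀ i < n, φZ (QuotientGroup.mk' (Subgroup.center (ArtinD n)) (gD n i)) = gZ) :
    gZ ^ (kap n * ((n * (n - 1) : ℕ) : ℤ)) = 1 := by
  have hn2 : 2 ≤ n := by omega
  have hIsD : ArtinAux.IsD n (gD n) := by
    constructor
    · intro i hi
      exact ArtinAux.gD_br (by omega) (by omega) (Or.inl ⟨rfl, by omega⟩)
    · intro i hi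
      exact ArtinAux.gD_br (by omega) (by omega) (Or.inr ⟨by omega, rfl⟩)
    · intro i j h1 h2
      exact ArtinAux.gD_comm (by omega) (by omega)
        (by rintro (⟨h3, h4⟩|⟨h3, h4⟩) <;> omega)
    · intro i h1 h2
      exact ArtinAux.gD_comm (by omega) (by omega)
        (by rintro (⟨h3, h4⟩|⟨h3, h4⟩) <;> omega)
  have hconj := ArtinAux.main_conj n hn2 (gD n) hIsD
  have hdelta : deltaD n = deltaDin n (gD n) := rfl
  have hsiglt : ∀ i < n, ArtinAux.sig n i < n := by
    intro i hi; unfold ArtinAux.sig; split_ifs <;> omega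
  have hz : ∀ i < n, (deltaD n ^ kap n) * gD n i = gD n i * (deltaD n ^ kap n) := by
    intro i hi
    rcases Nat.mod_two_eq_zero_or_one n with hp | hp
    · have hk : kap n = 1 := by simp [kap, Nat.odd_iff, hp]
      rw [hk, zpow_one]
      have hs : ArtinAux.sig n i = i := by unfold ArtinAux.sig; split_ifs <;> omega
      have h1 := hconj i hi
      rw [hs] at h1
      rw [hdelta, h1]
    · have hk : kap n = 2 := by simp [kap, Nat.odd_iff, hp]
      have hss : ArtinAux.sig n (ArtinAux.sig n i) = i := by
        unfold ArtinAux.sig; split_ifs <;> omega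
      have h1 := hconj i hi
      have h2 := hconj (ArtinAux.sig n i) (hsiglt i hi)
      rw [hss] at h2
      rw [hk, show (2:ℤ) = ((2:ℕ):ℤ) from rfl, zpow_natCast, hdelta]
      calc deltaDin n (gD n) ^ 2 * gD n i
          = deltaDin n (gD n) * (deltaDin n (gD n) * gD n i) := by rw [pow_two, mul_assoc]
        _ = deltaDin n (gD n) * (gD n (ArtinAux.sig n i) * deltaDin n (gD n)) := by rw [h1]
        _ = (deltaDin n (gD n) * gD n (ArtinAux.sig n i)) * deltaDin n (gD n) := by
            rw [mul_assoc]
        _ = (gD n i * deltaDin n (gD n)) * deltaDin n (gD n) := by rw [h2]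
        _ = gD n i * deltaDin n (gD n) ^ 2 := by rw [pow_two]; group
  have hzc : deltaD n ^ kap n ∈ Subgroup.center (ArtinD n) := by
    rw [Subgroup.mem_center_iff]
    intro g
    have hg : g ∈ Subgroup.centralizer {deltaD n ^ kap n} := by
      apply PresentedGroup.generated_by
      intro j
      rw [Subgroup.mem_centralizer_iff]
      intro h hh
      rw [Set.mem_singleton_iff] at hh
      subst hh
      have hof : gD n j.val = PresentedGroup.of (rels := ArelD n) j := by
        simp [gD, j.isLt]
      have := hz j.val j.isLt
      rwa [hof] at this
    exact (Subgroup.mem_centralizer_iff.mp hg (deltaD n ^ kap n) (Set.mem_singleton _)).symm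
  have hq1 : φZ (QuotientGroup.mk' (Subgroup.center (ArtinD n)) (deltaD n ^ kap n)) = 1 := by
    have h1 : (QuotientGroup.mk' (Subgroup.center (ArtinD n))) (deltaD n ^ kap n) = 1 := by
      rw [QuotientGroup.mk'_apply]
      exact (QuotientGroup.eq_one_iff _).mpr hzc
    rw [h1, map_one]
  have hcomp : φZ (QuotientGroup.mk' (Subgroup.center (ArtinD n)) (deltaD n))
      = gZ ^ (n * (n-1)) := by
    have e1 : φZ (QuotientGroup.mk' (Subgroup.center (ArtinD n)) (deltaD n))
        = (φZ.comp (QuotientGroup.mk' (Subgroup.center (ArtinD n)))) (deltaDin n (gD n)) := rfl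
    have e2 : deltaDin n
          (fun i => (φZ.comp (QuotientGroup.mk' (Subgroup.center (ArtinD n)))) (gD n i))
        = deltaDin n (fun _ => gZ) :=
      ArtinAux.deltaDin_congr (fun j hj => hφ j hj)
    rw [e1, ArtinAux.hom_deltaDin, e2, ArtinAux.deltaDin_const n hn2 gZ]
  have hfin : (gZ ^ (n*(n-1))) ^ (kap n) = 1 := by
    have h2 : φZ (QuotientGroup.mk' (Subgroup.center (ArtinD n)) (deltaD n ^ kap n))
        = (φZ (QuotientGroup.mk' (Subgroup.center (ArtinD n)) (deltaD n))) ^ kap n := by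
      rw [map_zpow, map_zpow]
    rw [hcomp] at h2
    rw [← h2]
    exact hq1
  calc gZ ^ (kap n * ((n*(n-1) : ℕ) : ℤ)) = gZ ^ (((n*(n-1):ℕ):ℤ) * kap n) := by
        rw [Int.mul_comm]
    _ = (gZ ^ ((n*(n-1):ℕ):ℤ)) ^ kap n := by rw [zpow_mul]
    _ = (gZ ^ (n*(n-1) : ℕ)) ^ kap n := by rw [zpow_natCast]
    _ = 1 := hfin
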